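/- For all i, j ∈ {1,…,N}, the (i,j) entry of the total L-operator satisfies Σ_{ρ=1}^{ℓ} a_i^ρ c_j^ρ = L_{ij} (q_j^ℓ − q_i^0); equivalently, L_{ij} = −(Σ_{ρ=1}^{ℓ} a_i^ρ c_j^ρ)/(q_i^0 − q_j^ℓ), where q_j^ℓ = q_j^0 − γ. -/

import Mathlib

open Real Finset Matrix Kronecker

namespace SpinRS

/-- Phase space: `q`-coordinates and `p`-coordinates indexed by (particle, node). -/
abbrev M (N : ℕ) : Type := ((Fin N × ℕ) → ℝ) × ((Fin N × ℕ) → ℝ)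

/-- Extended position coordinate `q_i^α`, satisfying `q_i^{α+ℓ} = q_i^α - γ`. -/
noncomputable def q (N ℓ : ℕ) (γ : ℝ) (i : Fin N) (α : ℤ) (x : M N) : ℝ :=
  x.1 (i, (α % (ℓ : ℤ)).toNat) - γ * ((α / (ℓ : ℤ) : ℤ) : ℝ)

/-- Extended momentum coordinate `p_i^α`, satisfying `p_i^{α+ℓ} = p_i^α`. -/
def p (N ℓ : ℕ) (i : Fin N) (α : ℤ) (x : M N) : ℝ :=
  x.2 (i, (α % (ℓ : ℤ)).toNat)

/-- Partial derivative with respect to the coordinate `q_i^a`, `0 ≤ a < ℓ`. -/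
noncomputable def pdq (N : ℕ) (i : Fin N) (a : ℕ) (f : M N → ℝ) (x : M N) : ℝ :=
  deriv (fun s : ℝ => f (Function.update x.1 (i, a) s, x.2)) (x.1 (i, a))

/-- Partial derivative with respect to the coordinate `p_i^a`, `0 ≤ a < ℓ`. -/
noncomputable def pdp (N : ℕ) (i : Fin N) (a : ℕ) (f : M N → ℝ) (x : M N) : ℝ :=
  deriv (fun s : ℝ => f (x.1, Function.update x.2 (i, a) s)) (x.2 (i, a))

/-- The Poisson bracket `{f, g}`. -/
noncomputable def Pb (N ℓ : ℕ) (f g : M N → ℝ) (x : M N) : ℝ :=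
  ∑ i : Fin N, ∑ a ∈ Finset.range ℓ,
    (pdq N i a f x * pdp N i a g x - pdp N i a f x * pdq N i a g x)

/-- The open set `U` where the extended coordinates are pairwise distinct. -/
def U (N ℓ : ℕ) (γ : ℝ) : Set (M N) :=
  {x | ∀ (i j : Fin N) (α β : ℤ), 0 ≤ α → α ≤ ℓ → 0 ≤ β → β ≤ ℓ →
    (i, α) ≠ (j, β) → q N ℓ γ i α x ≠ q N ℓ γ j β x}

/-- The gauge polynomial `χ^α(z)`. -/
noncomputable def chi (N ℓ : ℕ) (γ : ℝ) (α : ℤ) (z : ℝ) (x : M N) : ℝ :=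
  ∏ i : Fin N, (z - q N ℓ γ i α x)

/-- The γ-deformed monopole operator `u_i^{α,s}` (`s = 1` for `+`, `s = -1` for `-`). -/
noncomputable def u (N ℓ : ℕ) (γ : ℝ) (s : ℤ) (i : Fin N) (α : ℤ) (x : M N) : ℝ :=
  Real.exp ((s : ℝ) * p N ℓ i α x) * chi N ℓ γ (α + s) (q N ℓ γ i α x) x /
    ∏ j ∈ Finset.univ.erase i, (q N ℓ γ i α x - q N ℓ γ j α x)

/-- Kronecker delta modulo `ℓ`. -/
def dmod (ℓ : ℕ) (α β : ℤ) : ℝ := if α % (ℓ : ℤ) = β % (ℓ : ℤ) then 1 else 0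

/-- The Cartan matrix `κ^{αβ}` of the necklace quiver. -/
def kappa (ℓ : ℕ) (α β : ℤ) : ℝ :=
  2 * dmod ℓ α β - dmod ℓ (α + 1) β - dmod ℓ α (β + 1)

/-- One-site `L`-operator `L^{α,s}` as a matrix-valued function. -/
noncomputable def Lmat (N ℓ : ℕ) (γ : ℝ) (s : ℤ) (α : ℤ) (x : M N) :
    Matrix (Fin N) (Fin N) ℝ :=
  Matrix.of fun i j => u N ℓ γ s j (α + 1) x / (q N ℓ γ j (α + 1) x - q N ℓ γ i α x)

/-- The ordered product `L^{α,s} L^{α+1,s} ⋯ L^{α+n-1,s}`. -/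
noncomputable def prodL (N ℓ : ℕ) (γ : ℝ) (s : ℤ) (α : ℤ) (n : ℕ) (x : M N) :
    Matrix (Fin N) (Fin N) ℝ :=
  ((List.range n).map (fun k => Lmat N ℓ γ s (α + (k : ℤ)) x)).prod

/-- The total `L`-operator `L = L^{0,+} L^{1,+} ⋯ L^{ℓ-1,+}`. -/
noncomputable def Ltot (N ℓ : ℕ) (γ : ℝ) (x : M N) : Matrix (Fin N) (Fin N) ℝ :=
  prodL N ℓ γ 1 0 ℓ x

/-- The Hamiltonians `H[n] = Tr(L^n)`. -/
noncomputable def Ham (N ℓ : ℕ) (γ : ℝ) (n : ℕ) (x : M N) : ℝ :=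
  Matrix.trace (Ltot N ℓ γ x ^ n)

/-- The matrix Poisson bracket `{A₁, B₂}` in `End(ℝ^N) ⊗ End(ℝ^N)`. -/
noncomputable def PbMat (N ℓ : ℕ) (A B : M N → Matrix (Fin N) (Fin N) ℝ) (x : M N) :
    Matrix (Fin N × Fin N) (Fin N × Fin N) ℝ :=
  Matrix.of fun ik jl => Pb N ℓ (fun y => A y ik.1 jl.1) (fun y => B y ik.2 jl.2) x

/-- Matrix unit `e_{ij}`. -/
noncomputable def Eu (N : ℕ) (i j : Fin N) : Matrix (Fin N) (Fin N) ℝ :=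
  Matrix.single i j 1

/-- The matrix `r^α`. -/
noncomputable def rmat (N ℓ : ℕ) (γ : ℝ) (α : ℤ) (x : M N) :
    Matrix (Fin N × Fin N) (Fin N × Fin N) ℝ :=
  ∑ i : Fin N, ∑ j ∈ Finset.univ.erase i,
    (1 / (q N ℓ γ i α x - q N ℓ γ j α x)) •
      ((Eu N i i - Eu N i j) ⊗ₖ (Eu N j j - Eu N j i))

/-- The matrix `r̄^α`. -/
noncomputable def rbar (N ℓ : ℕ) (γ : ℝ) (α : ℤ) (x : M N) :
    Matrix (Fin N × Fin N) (Fin N × Fin N) ℝ :=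
  ∑ i : Fin N, ∑ j ∈ Finset.univ.erase i,
    (1 / (q N ℓ γ i α x - q N ℓ γ j α x)) • ((Eu N i i - Eu N i j) ⊗ₖ Eu N j j)

/-- The matrix `r̲^α`. -/
noncomputable def runder (N ℓ : ℕ) (γ : ℝ) (α : ℤ) (x : M N) :
    Matrix (Fin N × Fin N) (Fin N × Fin N) ℝ :=
  ∑ i : Fin N, ∑ j ∈ Finset.univ.erase i,
    (1 / (q N ℓ γ i α x - q N ℓ γ j α x)) •
      (Eu N i j ⊗ₖ Eu N j i - Eu N i i ⊗ₖ Eu N j j)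

/-- Swap of the two tensor factors of `End(ℝ^N) ⊗ End(ℝ^N)`. -/
def swapT (N : ℕ) (R : Matrix (Fin N × Fin N) (Fin N × Fin N) ℝ) :
    Matrix (Fin N × Fin N) (Fin N × Fin N) ℝ :=
  Matrix.of fun ik jl => R (ik.2, ik.1) (jl.2, jl.1)

/-- The zero mode `E^α = Σ_i u_i^{α,+}`. -/
noncomputable def Egen (N ℓ : ℕ) (γ : ℝ) (α : ℤ) (x : M N) : ℝ :=
  ∑ i : Fin N, u N ℓ γ 1 i α x

/-- The zero mode `F^α = Σ_i u_i^{α,-}`. -/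
noncomputable def Fgen (N ℓ : ℕ) (γ : ℝ) (α : ℤ) (x : M N) : ℝ :=
  ∑ i : Fin N, u N ℓ γ (-1) i α x

/-- The Cartan zero mode `H^α = Σ_i (2q_i^α - q_i^{α+1} - q_i^{α-1})`. -/
noncomputable def Hcar (N ℓ : ℕ) (γ : ℝ) (α : ℤ) (x : M N) : ℝ :=
  ∑ i : Fin N, (2 * q N ℓ γ i α x - q N ℓ γ i (α + 1) x - q N ℓ γ i (α - 1) x)

/-- Generating series `e^α(z)`. -/
noncomputable def egens (N ℓ : ℕ) (γ : ℝ) (α : ℤ) (z : ℝ) (x : M N) : ℝ :=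
  ∑ i : Fin N, u N ℓ γ 1 i α x / (z - q N ℓ γ i α x)

/-- Generating series `f^α(z)`. -/
noncomputable def fgens (N ℓ : ℕ) (γ : ℝ) (α : ℤ) (z : ℝ) (x : M N) : ℝ :=
  ∑ i : Fin N, u N ℓ γ (-1) i α x / (z - q N ℓ γ i α x)

/-- Generating series `h^α(z) = χ^{α+1}(z) χ^{α-1}(z) / χ^α(z)²`. -/
noncomputable def hgens (N ℓ : ℕ) (γ : ℝ) (α : ℤ) (z : ℝ) (x : M N) : ℝ :=
  chi N ℓ γ (α + 1) z x * chi N ℓ γ (α - 1) z x / (chi N ℓ γ α z x) ^ 2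

/-- `V^s_{α,β} = u^{α,s} L^{α,s} ⋯ L^{β-1,s} e`. -/
noncomputable def Vgen (N ℓ : ℕ) (γ : ℝ) (s : ℤ) (α β : ℤ) (x : M N) : ℝ :=
  ∑ i : Fin N, ∑ j : Fin N, u N ℓ γ s i α x * prodL N ℓ γ s α (β - α).toNat x i j

/-- The loop algebra generators `J^{αβ}[n]`, for `α, β ∈ {1,…,ℓ}`, `n : ℤ`. -/
noncomputable def Jgen (N ℓ : ℕ) (γ : ℝ) (α β : ℤ) (n : ℤ) (x : M N) : ℝ :=
  if 0 < n then Vgen N ℓ γ 1 α (β + n * ℓ - 1) x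
  else if n < 0 then Vgen N ℓ γ (-1) β (α + (-n) * ℓ - 1) x
  else if β < α then Vgen N ℓ γ (-1) β (α - 1) x
  else if α < β then Vgen N ℓ γ 1 α (β - 1) x
  else ∑ i : Fin N, (q N ℓ γ i α x - q N ℓ γ i (α - 1) x)

/-- The spin variables `a_i^α = (L^{0,+} ⋯ L^{α-2,+} e)_i`, `α ∈ {1,…,ℓ}`. -/
noncomputable def aspin (N ℓ : ℕ) (γ : ℝ) (α : ℤ) (x : M N) (i : Fin N) : ℝ :=
  ∑ j : Fin N, prodL N ℓ γ 1 0 (α - 1).toNat x i j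

/-- The spin variables `c_j^α = (u^{α,+} L^{α,+} ⋯ L^{ℓ-1,+})_j`, `α ∈ {1,…,ℓ}`. -/
noncomputable def cspin (N ℓ : ℕ) (γ : ℝ) (α : ℤ) (x : M N) (j : Fin N) : ℝ :=
  ∑ i : Fin N, u N ℓ γ 1 i α x * prodL N ℓ γ 1 α ((ℓ : ℤ) - α).toNat x i j


lemma prodL_zero (N ℓ : ℕ) (γ : ℝ) (s α : ℤ) (x : M N) :
    prodL N ℓ γ s α 0 x = 1 := by simp [prodL]

lemma prodL_succ (N ℓ : ℕ) (γ : ℝ) (s α : ℤ) (n : ℕ) (x : M N) :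
    prodL N ℓ γ s α (n + 1) x = prodL N ℓ γ s α n x * Lmat N ℓ γ s (α + n) x := by
  simp [prodL, List.range_succ]

lemma one_site_step (N ℓ : ℕ) (γ : ℝ) (α : ℤ) (x : M N)
    (h : ∀ i j : Fin N, q N ℓ γ j (α + 1) x ≠ q N ℓ γ i α x) :
    Lmat N ℓ γ 1 α x * Matrix.diagonal (fun j => q N ℓ γ j (α + 1) x)
      - Matrix.diagonal (fun i => q N ℓ γ i α x) * Lmat N ℓ γ 1 α x
    = Matrix.of (fun _ j : Fin N => u N ℓ γ 1 j (α + 1) x) := by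
  ext i j
  simp only [Matrix.sub_apply, Matrix.mul_diagonal, Matrix.diagonal_mul, Lmat,
    Matrix.of_apply]
  have hne := sub_ne_zero.mpr (h i j)
  field_simp

lemma telescope (N ℓ : ℕ) (γ : ℝ) (x : M N)
    (h : ∀ α : ℤ, 0 ≤ α → α < ℓ → ∀ i j : Fin N, q N ℓ γ j (α + 1) x ≠ q N ℓ γ i α x)
    (n : ℕ) (hn : n ≤ ℓ) :
    prodL N ℓ γ 1 0 n x * Matrix.diagonal (fun j => q N ℓ γ j (n : ℤ) x)
      - Matrix.diagonal (fun i => q N ℓ γ i 0 x) * prodL N ℓ γ 1 0 n x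
    = ∑ k ∈ Finset.range n, prodL N ℓ γ 1 0 k x
        * Matrix.of (fun _ j : Fin N => u N ℓ γ 1 j ((k : ℤ) + 1) x)
        * prodL N ℓ γ 1 ((k : ℤ) + 1) (n - (k + 1)) x := by
  induction n with
  | zero => simp [prodL_zero]
  | succ n ih =>
    have hn' : n ≤ ℓ := Nat.le_of_succ_le hn
    have hstep := one_site_step N ℓ γ n x (h n (by positivity) (by exact_mod_cast hn))
    have hcast : ((n + 1 : ℕ) : ℤ) = (n : ℤ) + 1 := by push_cast; ring
    rw [prodL_succ, hcast, zero_add]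
    have lhs_eq :
        prodL N ℓ γ 1 0 n x * Lmat N ℓ γ 1 (n : ℤ) x
            * Matrix.diagonal (fun j => q N ℓ γ j ((n : ℤ) + 1) x)
          - Matrix.diagonal (fun i => q N ℓ γ i 0 x)
            * (prodL N ℓ γ 1 0 n x * Lmat N ℓ γ 1 (n : ℤ) x)
        = prodL N ℓ γ 1 0 n x
            * (Lmat N ℓ γ 1 (n : ℤ) x * Matrix.diagonal (fun j => q N ℓ γ j ((n : ℤ) + 1) x)
               - Matrix.diagonal (fun i => q N ℓ γ i (n : ℤ) x) * Lmat N ℓ γ 1 (n : ℤ) x)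
          + (prodL N ℓ γ 1 0 n x * Matrix.diagonal (fun j => q N ℓ γ j (n : ℤ) x)
             - Matrix.diagonal (fun i => q N ℓ γ i 0 x) * prodL N ℓ γ 1 0 n x)
            * Lmat N ℓ γ 1 (n : ℤ) x := by
      noncomm_ring
    rw [lhs_eq, hstep, ih hn']
    rw [Finset.sum_range_succ, Finset.sum_mul, add_comm]
    congr 1
    · refine Finset.sum_congr rfl fun k hk => ?_
      have hk' : k < n := Finset.mem_range.mp hk
      have h1 : n + 1 - (k + 1) = (n - (k + 1)) + 1 := by omega
      have h2 : ((k : ℤ) + 1) + ((n - (k + 1) : ℕ) : ℤ) = (n : ℤ) := by omega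
      rw [h1, prodL_succ, h2, mul_assoc]
    · have : n + 1 - (n + 1) = 0 := by omega
      rw [this, prodL_zero, mul_one]

lemma icc_reindex (ℓ : ℕ) (f : ℤ → ℝ) :
    ∑ ρ ∈ Finset.Icc (1 : ℤ) (ℓ : ℤ), f ρ = ∑ k ∈ Finset.range ℓ, f ((k : ℤ) + 1) := by
  have hmap : Finset.Icc (1 : ℤ) (ℓ : ℤ)
      = (Finset.range ℓ).map (⟨fun k : ℕ => ((k : ℤ) + 1), fun a b hab => by simp only [] at hab; omega⟩ : ℕ ↪ ℤ) := by
    ext ρ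
    simp only [Finset.mem_Icc, Finset.mem_map, Finset.mem_range,
      Function.Embedding.coeFn_mk]
    constructor
    · rintro ⟨h1, h2⟩; exact ⟨(ρ - 1).toNat, by omega, by show (((ρ - 1).toNat : ℕ) : ℤ) + 1 = ρ; omega⟩
    · rintro ⟨k, hk, rfl⟩; show 1 ≤ (k : ℤ) + 1 ∧ (k : ℤ) + 1 ≤ (ℓ : ℤ); omega
  rw [hmap, Finset.sum_map]
  rfl

/-- the total L-operator in terms of the spin variables. -/
theorem total_L_spin_formula_rational
    (N ℓ : ℕ) (hN : 1 ≤ N) (hℓ : 3 ≤ ℓ) (γ : ℝ) (hγ : γ ≠ 0)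
    (i j : Fin N) (x : M N) (hx : x ∈ U N ℓ γ) :
    (∑ ρ ∈ Finset.Icc (1 : ℤ) (ℓ : ℤ), aspin N ℓ γ ρ x i * cspin N ℓ γ ρ x j) =
      Ltot N ℓ γ x i j * (q N ℓ γ j ℓ x - q N ℓ γ i 0 x) ∧
    Ltot N ℓ γ x i j =
      -((∑ ρ ∈ Finset.Icc (1 : ℤ) (ℓ : ℤ), aspin N ℓ γ ρ x i * cspin N ℓ γ ρ x j) /
        (q N ℓ γ i 0 x - q N ℓ γ j ℓ x)) := by
  -- nonvanishing of consecutive differences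
  have h : ∀ α : ℤ, 0 ≤ α → α < ℓ → ∀ a b : Fin N,
      q N ℓ γ b (α + 1) x ≠ q N ℓ γ a α x := by
    intro α h0 h1 a b
    refine hx b a (α + 1) α (by omega) (by omega) h0 (by omega) ?_
    intro hcontra
    have := (Prod.mk.injEq _ _ _ _).mp hcontra
    omega
  have key := telescope N ℓ γ x h ℓ le_rfl
  have keyij : (prodL N ℓ γ 1 0 ℓ x * Matrix.diagonal (fun j => q N ℓ γ j (ℓ : ℤ) x)
      - Matrix.diagonal (fun i => q N ℓ γ i 0 x) * prodL N ℓ γ 1 0 ℓ x) i j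
      = (∑ k ∈ Finset.range ℓ, prodL N ℓ γ 1 0 k x
          * Matrix.of (fun _ j : Fin N => u N ℓ γ 1 j ((k : ℤ) + 1) x)
          * prodL N ℓ γ 1 ((k : ℤ) + 1) (ℓ - (k + 1)) x) i j := by rw [key]
  have hL : Ltot N ℓ γ x = prodL N ℓ γ 1 0 ℓ x := rfl
  have lhs_entry : (prodL N ℓ γ 1 0 ℓ x * Matrix.diagonal (fun j => q N ℓ γ j (ℓ : ℤ) x)
      - Matrix.diagonal (fun i => q N ℓ γ i 0 x) * prodL N ℓ γ 1 0 ℓ x) i j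
      = Ltot N ℓ γ x i j * (q N ℓ γ j ℓ x - q N ℓ γ i 0 x) := by
    simp only [Matrix.sub_apply, Matrix.mul_diagonal, Matrix.diagonal_mul, hL]
    ring
  have rhs_entry : (∑ k ∈ Finset.range ℓ, prodL N ℓ γ 1 0 k x
          * Matrix.of (fun _ j : Fin N => u N ℓ γ 1 j ((k : ℤ) + 1) x)
          * prodL N ℓ γ 1 ((k : ℤ) + 1) (ℓ - (k + 1)) x) i j
      = ∑ ρ ∈ Finset.Icc (1 : ℤ) (ℓ : ℤ), aspin N ℓ γ ρ x i * cspin N ℓ γ ρ x j := by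
    rw [icc_reindex ℓ (fun ρ => aspin N ℓ γ ρ x i * cspin N ℓ γ ρ x j),
      Matrix.sum_apply]
    refine Finset.sum_congr rfl fun k hk => ?_
    have hk' : k < ℓ := Finset.mem_range.mp hk
    have ta : ((k : ℤ) + 1 - 1).toNat = k := by omega
    have tc : ((ℓ : ℤ) - ((k : ℤ) + 1)).toNat = ℓ - (k + 1) := by omega
    simp only [Matrix.mul_apply, Matrix.of_apply, Finset.sum_mul]
    rw [aspin, cspin, ta, tc, Finset.sum_mul_sum, Finset.sum_comm]
    exact Finset.sum_congr rfl fun m _ => Finset.sum_congr rfl fun m' _ => by ring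
  have main : (∑ ρ ∈ Finset.Icc (1 : ℤ) (ℓ : ℤ), aspin N ℓ γ ρ x i * cspin N ℓ γ ρ x j)
      = Ltot N ℓ γ x i j * (q N ℓ γ j ℓ x - q N ℓ γ i 0 x) := by
    rw [← rhs_entry, ← keyij, lhs_entry]
  refine ⟨main, ?_⟩
  have hℓ0 : (ℓ : ℤ) ≠ 0 := by omega
  have hdiff : q N ℓ γ i 0 x - q N ℓ γ j (ℓ : ℤ) x ≠ 0 := by
    by_cases hij : i = j
    · subst hij
      have : q N ℓ γ i 0 x - q N ℓ γ i (ℓ : ℤ) x = γ := by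
        simp [q, Int.emod_self, Int.ediv_self hℓ0, Int.zero_ediv]
      rw [this]; exact hγ
    · exact sub_ne_zero.mpr (hx i j 0 ℓ le_rfl (by omega) (by omega) le_rfl
        (by simp [Prod.ext_iff, hij]))
  rw [main]
  field_simp
  ring


end SpinRS
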